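/- Let W : ℝ^{d×d} → ℝ ∪ {∞} and let V be lower semicontinuous polyconvex with V ≤ W. Define V_iso(F) := sup over R₁, R₂ ∈ SO(d) of V(R₁ F R₂). If W is isotropic, then V_iso is isotropic, V ≤ V_iso ≤ W, and V_iso is a supremum of lower semicontinuous convex functions composed with the minors map, hence again lower semicontinuous polyconvex. -/

import Mathlib

open Matrix

noncomputable section

abbrev Mat (d : ℕ) := Matrix (Fin d) (Fin d) ℝ

def SO (d : ℕ) : Set (Mat d) := {R | R * Rᵀ = 1 ∧ R.det = 1}

def Isotropic {d : ℕ} {α : Type*} (W : Mat d → α) : Prop :=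
  ∀ (F R₁ R₂ : Mat d), R₁ ∈ SO d → R₂ ∈ SO d → W (R₁ * F * R₂) = W F

/-- Convexity for extended-real-valued functions. -/
def ConvexE {V : Type*} [AddCommGroup V] [Module ℝ V] (g : V → EReal) : Prop :=
  ∀ (x y : V) (a b : ℝ), 0 ≤ a → 0 ≤ b → a + b = 1 →
    g (a • x + b • y) ≤ (a : EReal) * g x + (b : EReal) * g y

/-- The minors map for `d = 2`: `𝓜(F) = (F, det F) ∈ ℝ⁵`. -/
def M2 (F : Mat 2) : Fin 5 → ℝ := ![F 0 0, F 0 1, F 1 0, F 1 1, F.det]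

/-- `V` is lower semicontinuous polyconvex: `V = G ∘ 𝓜` with `G` convex and lsc. -/
def LscPolyconvex (V : Mat 2 → EReal) : Prop :=
  ∃ G : (Fin 5 → ℝ) → EReal, ConvexE G ∧ LowerSemicontinuous G ∧ ∀ F, V F = G (M2 F)

lemma so_one (d : ℕ) : (1 : Mat d) ∈ SO d := ⟨by simp, by simp⟩

lemma so_mul {d : ℕ} {A B : Mat d} (hA : A ∈ SO d) (hB : B ∈ SO d) : A * B ∈ SO d := by
  refine ⟨?_, by rw [det_mul, hA.2, hB.2, one_mul]⟩
  rw [transpose_mul]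
  calc A * B * (Bᵀ * Aᵀ) = A * (B * Bᵀ) * Aᵀ := by rw [mul_assoc, mul_assoc, mul_assoc]
    _ = 1 := by rw [hB.1, mul_one, hA.1]

lemma so_transpose {d : ℕ} {A : Mat d} (hA : A ∈ SO d) : Aᵀ ∈ SO d :=
  ⟨by rw [transpose_transpose]; exact mul_eq_one_comm.mp hA.1,
   by rw [det_transpose]; exact hA.2⟩

def mfive (x : Fin 5 → ℝ) : Mat 2 := !![x 0, x 1; x 2, x 3]

def Lmap (R₁ R₂ : Mat 2) (x : Fin 5 → ℝ) : Fin 5 → ℝ :=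
  ![(R₁ * mfive x * R₂) 0 0, (R₁ * mfive x * R₂) 0 1,
    (R₁ * mfive x * R₂) 1 0, (R₁ * mfive x * R₂) 1 1, x 4]

lemma mfive_M2 (F : Mat 2) (t : ℝ) : mfive ![F 0 0, F 0 1, F 1 0, F 1 1, t] = F := by
  rw [mfive]
  simp only [Matrix.cons_val_zero, Matrix.cons_val_one, Matrix.head_cons]
  exact (Matrix.eta_fin_two F).symm

lemma Lmap_M2 {R₁ R₂ : Mat 2} (h₁ : R₁ ∈ SO 2) (h₂ : R₂ ∈ SO 2) (F : Mat 2) :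
    Lmap R₁ R₂ (M2 F) = M2 (R₁ * F * R₂) := by
  funext j
  fin_cases j <;>
    simp [Lmap, M2, mfive_M2, det_mul, h₁.2, h₂.2]

lemma Lmap_linear (R₁ R₂ : Mat 2) (a b : ℝ) (x y : Fin 5 → ℝ) :
    Lmap R₁ R₂ (a • x + b • y) = a • Lmap R₁ R₂ x + b • Lmap R₁ R₂ y := by
  funext j
  fin_cases j <;>
    simp [Lmap, mfive, mul_apply, Fin.sum_univ_two] <;> ring

lemma Lmap_continuous (R₁ R₂ : Mat 2) : Continuous (Lmap R₁ R₂) := by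
  have hm : Continuous mfive := by
    apply continuous_matrix
    intro i j
    fin_cases i <;> fin_cases j <;> simp [mfive] <;> exact continuous_apply _
  have h : Continuous fun x => R₁ * mfive x * R₂ :=
    (Continuous.matrix_mul (continuous_const.matrix_mul hm) continuous_const)
  apply continuous_pi
  intro j
  fin_cases j <;> simp [Lmap]
  exacts [h.matrix_elem 0 0, h.matrix_elem 0 1, h.matrix_elem 1 0, h.matrix_elem 1 1,
    continuous_apply 4]

/-- If `W` is isotropic and `V` is lsc-polyconvex with `V ≤ W`, then
`V_iso(F) := sup_{R₁,R₂ ∈ SO} V(R₁ F R₂)` is isotropic, `V ≤ V_iso ≤ W`,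
and `V_iso` is a supremum of lsc convex functions composed with the minors map,
hence lsc-polyconvex. -/
theorem stmt4 (W V : Mat 2 → EReal) (hW : Isotropic W) (hV : LscPolyconvex V)
    (hVW : ∀ F, V F ≤ W F) :
    let Viso : Mat 2 → EReal := fun F =>
      sSup {y | ∃ R₁ R₂ : Mat 2, R₁ ∈ SO 2 ∧ R₂ ∈ SO 2 ∧ y = V (R₁ * F * R₂)}
    Isotropic Viso ∧ (∀ F, V F ≤ Viso F) ∧ (∀ F, Viso F ≤ W F) ∧
    (∃ (ι : Type) (_ : Nonempty ι) (G : ι → (Fin 5 → ℝ) → EReal),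
      (∀ i, ConvexE (G i) ∧ LowerSemicontinuous (G i)) ∧
      ∀ F, Viso F = ⨆ i, G i (M2 F)) ∧
    LscPolyconvex Viso := by
  intro Viso
  obtain ⟨G₀, hGc, hGl, hG⟩ := hV
  -- the index type
  set ι : Type := {R : Mat 2 // R ∈ SO 2} × {R : Mat 2 // R ∈ SO 2} with hι
  have hne : Nonempty ι := ⟨⟨⟨1, so_one 2⟩, ⟨1, so_one 2⟩⟩⟩
  set G : ι → (Fin 5 → ℝ) → EReal := fun i x => G₀ (Lmap i.1.1 i.2.1 x) with hGdef
  have hGprop : ∀ i : ι, ConvexE (G i) ∧ LowerSemicontinuous (G i) := by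
    intro i
    constructor
    · intro x y a b ha hb hab
      simp only [hGdef, Lmap_linear]
      exact hGc _ _ a b ha hb hab
    · exact LowerSemicontinuous.comp hGl (Lmap_continuous _ _)
  have hrange : ∀ F : Mat 2,
      {y | ∃ R₁ R₂ : Mat 2, R₁ ∈ SO 2 ∧ R₂ ∈ SO 2 ∧ y = V (R₁ * F * R₂)}
        = Set.range (fun i : ι => V (i.1.1 * F * i.2.1)) := by
    intro F
    ext y
    constructor
    · rintro ⟨R₁, R₂, h₁, h₂, rfl⟩
      exact ⟨⟨⟨R₁, h₁⟩, ⟨R₂, h₂⟩⟩, rfl⟩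
    · rintro ⟨i, rfl⟩
      exact ⟨i.1.1, i.2.1, i.1.2, i.2.2, rfl⟩
  have hVisoSup : ∀ F, Viso F = ⨆ i : ι, G i (M2 F) := by
    intro F
    show sSup _ = _
    rw [hrange F, sSup_range]
    congr 1
    funext i
    rw [hGdef]
    simp only [Lmap_M2 i.1.2 i.2.2, ← hG]
  refine ⟨?_, ?_, ?_, ⟨ι, hne, G, hGprop, hVisoSup⟩, ?_⟩
  · -- isotropy
    intro F Q₁ Q₂ hQ₁ hQ₂
    show sSup _ = sSup _
    congr 1
    ext y
    constructor
    · rintro ⟨R₁, R₂, h₁, h₂, rfl⟩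
      refine ⟨R₁ * Q₁, Q₂ * R₂, so_mul h₁ hQ₁, so_mul hQ₂ h₂, ?_⟩
      simp [mul_assoc]
    · rintro ⟨S₁, S₂, h₁, h₂, rfl⟩
      refine ⟨S₁ * Q₁ᵀ, Q₂ᵀ * S₂, so_mul h₁ (so_transpose hQ₁), so_mul (so_transpose hQ₂) h₂, ?_⟩
      have e₁ : Q₁ᵀ * Q₁ = 1 := mul_eq_one_comm.mp hQ₁.1
      have e₂ : Q₂ * Q₂ᵀ = 1 := hQ₂.1
      have key : S₁ * Q₁ᵀ * (Q₁ * F * Q₂) * (Q₂ᵀ * S₂) = S₁ * F * S₂ := by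
        simp only [← mul_assoc]
        rw [mul_assoc S₁ Q₁ᵀ Q₁, e₁, mul_one, mul_assoc (S₁ * F) Q₂ Q₂ᵀ, e₂, mul_one]
      rw [key]
  · -- V ≤ Viso
    intro F
    exact le_sSup ⟨1, 1, so_one 2, so_one 2, by simp⟩
  · -- Viso ≤ W
    intro F
    apply sSup_le
    rintro y ⟨R₁, R₂, h₁, h₂, rfl⟩
    calc V (R₁ * F * R₂) ≤ W (R₁ * F * R₂) := hVW _
      _ = W F := hW F R₁ R₂ h₁ h₂
  · -- lsc polyconvex
    refine ⟨fun x => ⨆ i : ι, G i x, ?_, ?_, ?_⟩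
    · intro x y a b ha hb hab
      apply iSup_le
      intro i
      calc G i (a • x + b • y) ≤ (a : EReal) * G i x + (b : EReal) * G i y :=
            (hGprop i).1 x y a b ha hb hab
        _ ≤ (a : EReal) * (⨆ j, G j x) + (b : EReal) * (⨆ j, G j y) := by
            apply add_le_add
            · exact mul_le_mul_of_nonneg_left (le_iSup (fun j => G j x) i)
                (by exact_mod_cast ha)
            · exact mul_le_mul_of_nonneg_left (le_iSup (fun j => G j y) i)
                (by exact_mod_cast hb)
    · exact lowerSemicontinuous_iSup fun i => (hGprop i).2
    · exact hVisoSup
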